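/- For every ρ ∈ [0,1], every B ≥ 0, every expert strategy x^π with x^π_v ∈ U for each v, and every sequence of RL suggestions x̃_1, …, x̃_T with x̃_v ∈ U ∪ {skip}, the strategy x produced by LOMAR's free-disposal switching rule has total reward satisfying R_T ≥ ρ·R^π_T − B. -/

import Mathlib

/-- `Vset x u v` = `V_{u,v}`: the set of online items among steps `1, …, v`
that strategy `x` matches to offline item `u`. -/
def Vset {U : Type*} [DecidableEq U] (x : ℕ → Option U) (u : U) (v : ℕ) : Finset ℕ :=
  (Finset.Icc 1 v).filter fun v' => x v' = some u

/-- `fRew cu wt S` = `f_u(S)`: the reward collected at an offline item of capacity `cu`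
in the free-disposal model, i.e. the maximum over subsets `E ⊆ S` with `|E| ≤ cu` of
`Σ_{v'∈E} wt v'`. -/
noncomputable def fRew (cu : ℕ) (wt : ℕ → ℝ) (S : Finset ℕ) : ℝ :=
  sSup {x | ∃ E ⊆ S, E.card ≤ cu ∧ x = ∑ v' ∈ E, wt v'}

/-- `topList cu wt S`: the rewards of a maximum-reward subset of `S` of size `≤ cu`
(i.e. the top `cu` rewards), sorted increasingly and padded with zeros to length `cu`;
its `j`-th entry (0-indexed) is `e_{u,j+1}(S)`. -/
noncomputable def topList (cu : ℕ) (wt : ℕ → ℝ) (S : Finset ℕ) : List ℝ :=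
  let l := (S.val.map wt).sort (· ≤ ·)
  List.replicate (cu - l.length) 0 ++ l.drop (l.length - cu)

/-- The hedging term
`G̃((V_u),(V^π_u)) = Σ_{u∈U} ( max_{1≤i≤c(u)} Σ_{j=1}^{i} (e_{u,j}(V_u) − e_{u,j}(V^π_u)) )⁺`. -/
noncomputable def hedgeSum {U : Type*} [Fintype U] (c : U → ℕ) (w : U → ℕ → ℝ)
    (V Vπ : U → Finset ℕ) : ℝ :=
  ∑ u : U, max (sSup ((fun i => ∑ j ∈ Finset.range i,
      ((topList (c u) (w u) (V u)).getD j 0 - (topList (c u) (w u) (Vπ u)).getD j 0)) ''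
    Set.Icc 1 (c u))) 0

/-- `totalRew c w x v` = `R_v = Σ_{u∈U} f_u(V_{u,v})`: the cumulative reward of
strategy `x` after step `v` in the free-disposal model. -/
noncomputable def totalRew {U : Type*} [Fintype U] [DecidableEq U] (c : U → ℕ)
    (w : U → ℕ → ℝ) (x : ℕ → Option U) (v : ℕ) : ℝ :=
  ∑ u : U, fRew (c u) (w u) (Vset x u v)

/-- LOMAR's free-disposal switching condition at step `v`: the RL suggestion `x̃_v`
may be followed iff `R_{v−1} + Δf_{x̃_v} ≥ ρ·(R^π_v + G_v) − B`, where `Δf_{x̃_v}` is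
the marginal reward of the RL decision and `G_v` is the hedging term computed with
LOMAR's sets updated by the RL decision and the expert's sets after step `v`. -/
noncomputable def fdCond {U : Type*} [Fintype U] [DecidableEq U] (c : U → ℕ)
    (w : U → ℕ → ℝ) (ρ B : ℝ) (xπ : ℕ → U) (x xt : ℕ → Option U) (v : ℕ) : Prop :=
  totalRew c w x (v - 1) +
    ((xt v).elim (0 : ℝ) fun u =>
      fRew (c u) (w u) (insert v (Vset x u (v - 1))) - fRew (c u) (w u) (Vset x u (v - 1))) ≥
  ρ * (totalRew c w (fun v' => some (xπ v')) v +
    hedgeSum c w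
      (fun u => if xt v = some u then insert v (Vset x u (v - 1)) else Vset x u (v - 1))
      (fun u => Vset (fun v' => some (xπ v')) u v)) - B


lemma sup'_congr_set {s₁ s₂ : Finset (Finset ℕ)} (h : s₁ = s₂) (h₁ : s₁.Nonempty)
    (f : Finset ℕ → ℝ) : s₁.sup' h₁ f = s₂.sup' (h ▸ h₁) f := by subst h; rfl

lemma sup'_const_add {s : Finset (Finset ℕ)} (h : s.Nonempty) (a : ℝ) (f : Finset ℕ → ℝ) :
    s.sup' h (fun E => a + f E) = a + s.sup' h f := by
  obtain ⟨b, hb, hbe⟩ := Finset.exists_mem_eq_sup' h f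
  apply le_antisymm
  · simp only [Finset.sup'_le_iff]
    intro b' hb'
    exact by have := Finset.le_sup' f hb'; linarith
  · rw [hbe]
    exact Finset.le_sup' (fun E => a + f E) hb

lemma fRew_eq_sup' (cu : ℕ) (wt : ℕ → ℝ) (S : Finset ℕ) :
    fRew cu wt S = (S.powerset.filter fun E => E.card ≤ cu).sup'
      (Finset.nonempty_iff_ne_empty.mpr (Finset.ne_empty_of_mem (Finset.mem_filter.mpr ⟨Finset.empty_mem_powerset _, (Finset.card_empty (α := ℕ)).le.trans (Nat.zero_le _)⟩))) (fun E => ∑ v' ∈ E, wt v') := by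
  have hne : ((S.powerset.filter fun E => E.card ≤ cu).image fun E => ∑ v' ∈ E, wt v').Nonempty :=
    Finset.Nonempty.image (Finset.nonempty_iff_ne_empty.mpr (Finset.ne_empty_of_mem (Finset.mem_filter.mpr ⟨Finset.empty_mem_powerset _, (Finset.card_empty (α := ℕ)).le.trans (Nat.zero_le _)⟩))) _
  have hset : {x | ∃ E ⊆ S, E.card ≤ cu ∧ x = ∑ v' ∈ E, wt v'} =
      ↑((S.powerset.filter fun E => E.card ≤ cu).image fun E => ∑ v' ∈ E, wt v') := by
    ext y
    simp only [Set.mem_setOf_eq, Finset.coe_image, Set.mem_image, Finset.mem_coe,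
      Finset.mem_filter, Finset.mem_powerset]
    constructor
    · rintro ⟨E, h1, h2, h3⟩; exact ⟨E, ⟨h1, h2⟩, h3.symm⟩
    · rintro ⟨E, ⟨h1, h2⟩, h3⟩; exact ⟨E, h1, h2, h3.symm⟩
  rw [fRew, hset, hne.csSup_eq_max', Finset.max'_eq_sup', Finset.sup'_image]
  rfl

lemma fRew_zero (wt : ℕ → ℝ) (S : Finset ℕ) : fRew 0 wt S = 0 := by
  rw [fRew_eq_sup']
  apply le_antisymm
  · simp only [Finset.sup'_le_iff, Finset.mem_filter, Finset.mem_powerset]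
    rintro E ⟨-, hE⟩
    obtain rfl := Finset.card_eq_zero.mp (Nat.le_zero.mp hE)
    simp
  · have h0 : (∅ : Finset ℕ) ∈ S.powerset.filter (fun E => E.card ≤ 0) := by simp
    exact Finset.le_sup'_of_le _ h0 (by simp)

lemma fRew_insert (cu : ℕ) (hcu : 1 ≤ cu) (wt : ℕ → ℝ) (S : Finset ℕ) {v : ℕ} (hv : v ∉ S) :
    fRew cu wt (insert v S) = max (fRew cu wt S) (fRew (cu - 1) wt S + wt v) := by
  rw [fRew_eq_sup', fRew_eq_sup', fRew_eq_sup']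
  have hfilt : S.powerset.filter (fun E => (insert v E).card ≤ cu) =
      S.powerset.filter (fun E => E.card ≤ cu - 1) := by
    apply Finset.filter_congr
    intro E hE
    simp only [Finset.mem_powerset] at hE
    have hvE : v ∉ E := fun h => hv (hE h)
    rw [Finset.card_insert_of_notMem hvE]
    omega
  have hps : (insert v S).powerset.filter (fun E => E.card ≤ cu) =
      (S.powerset.filter fun E => E.card ≤ cu) ∪
      ((S.powerset.filter fun E => E.card ≤ cu - 1).image (insert v)) := by
    rw [Finset.powerset_insert, Finset.filter_union, Finset.filter_image, hfilt]
  rw [sup'_congr_set hps _ _,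
    Finset.sup'_union ((Finset.nonempty_iff_ne_empty.mpr (Finset.ne_empty_of_mem (Finset.mem_filter.mpr ⟨Finset.empty_mem_powerset _, (Finset.card_empty (α := ℕ)).le.trans (Nat.zero_le _)⟩)))) (Finset.Nonempty.image (Finset.nonempty_iff_ne_empty.mpr (Finset.ne_empty_of_mem (Finset.mem_filter.mpr ⟨Finset.empty_mem_powerset _, (Finset.card_empty (α := ℕ)).le.trans (Nat.zero_le _)⟩))) _),
    Finset.sup'_image]
  congr 1
  have hcong : ∀ E ∈ S.powerset.filter (fun E => E.card ≤ cu - 1),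
      ((fun E => ∑ v' ∈ E, wt v') ∘ insert v) E = wt v + ∑ v' ∈ E, wt v' := by
    intro E hE
    simp only [Finset.mem_filter, Finset.mem_powerset] at hE
    exact Finset.sum_insert (fun h => hv (hE.1 h))
  rw [Finset.sup'_congr _ rfl hcong, sup'_const_add]
  ring

lemma drop_orderedInsert_sum {l : List ℝ} (hl : l.Pairwise (· ≤ ·)) (a : ℝ) {j : ℕ}
    (hj : j < l.length) :
    ((l.orderedInsert (· ≤ ·) a).drop (j + 1)).sum =
      max ((l.drop j).sum) ((l.drop (j + 1)).sum + a) := by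
  induction l generalizing j with
  | nil => simp at hj
  | cons b t ih =>
    by_cases hab : a ≤ b
    · rw [List.orderedInsert, if_pos hab]
      have haj : a ≤ (b :: t)[j] := by
        rcases Nat.eq_zero_or_pos j with rfl | hjpos
        · simpa using hab
        · obtain ⟨j', rfl⟩ : ∃ j', j = j' + 1 := ⟨j - 1, by omega⟩
          have hj' : j' < t.length := by simp at hj; omega
          have hb : b ≤ t[j'] := (List.pairwise_cons.mp hl).1 _ (List.getElem_mem _)
          simpa using le_trans hab hb
      have hdrop : (b :: t).drop j = (b :: t)[j] :: (b :: t).drop (j + 1) :=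
        List.drop_eq_getElem_cons hj
      have hle : ((b :: t).drop (j + 1)).sum + a ≤ ((b :: t).drop j).sum := by
        rw [hdrop]; simp only [List.sum_cons]; linarith
      rw [List.drop_succ_cons, eq_comm, max_eq_left hle]
    · rw [List.orderedInsert, if_neg hab]
      push_neg at hab
      rcases Nat.eq_zero_or_pos j with rfl | hjpos
      · simp only [zero_add, List.drop_succ_cons, List.drop_zero, List.drop_one]
        rw [(List.perm_orderedInsert _ a t).sum_eq]
        simp only [List.sum_cons, List.tail_cons]
        rw [eq_comm, max_eq_right] <;> linarith
      · obtain ⟨j', rfl⟩ : ∃ j', j = j' + 1 := ⟨j - 1, by omega⟩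
        have hj' : j' < t.length := by simp at hj; omega
        rw [List.drop_succ_cons, List.drop_succ_cons, List.drop_succ_cons,
          ih (List.pairwise_cons.mp hl).2 hj']

/-- The sorted list of rewards of `S`. -/
noncomputable def srt (wt : ℕ → ℝ) (S : Finset ℕ) : List ℝ := (S.val.map wt).sort (· ≤ ·)

lemma srt_sorted (wt : ℕ → ℝ) (S : Finset ℕ) : (srt wt S).Pairwise (· ≤ ·) :=
  Multiset.pairwise_sort _ _

lemma srt_insert (wt : ℕ → ℝ) {S : Finset ℕ} {v : ℕ} (hv : v ∉ S) :
    srt wt (insert v S) = (srt wt S).orderedInsert (· ≤ ·) (wt v) := by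
  refine List.Perm.eq_of_pairwise' (Multiset.pairwise_sort _ _)
    (List.Pairwise.orderedInsert _ _ (srt_sorted wt S)) ?_
  refine List.Perm.trans ?_ (List.perm_orderedInsert _ _ _).symm
  rw [← Multiset.coe_eq_coe]
  unfold srt
  rw [Finset.insert_val_of_notMem hv, Multiset.map_cons]
  rw [← Multiset.cons_coe, Multiset.sort_eq, Multiset.sort_eq]

lemma srt_length (wt : ℕ → ℝ) (S : Finset ℕ) : (srt wt S).length = S.card := by
  unfold srt
  rw [Multiset.length_sort, Multiset.card_map]
  rfl

lemma fRew_empty (k : ℕ) (wt : ℕ → ℝ) : fRew k wt ∅ = 0 := by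
  rw [fRew_eq_sup']
  have h : (∅ : Finset ℕ).powerset.filter (fun E => E.card ≤ k) = {∅} := by
    ext E; simp [Finset.subset_empty]
    rintro rfl; simp
  rw [sup'_congr_set h, Finset.sup'_singleton]
  simp

lemma fRew_eq_topSum (wt : ℕ → ℝ) (hw : ∀ m, 0 ≤ wt m) (S : Finset ℕ) (k : ℕ) :
    fRew k wt S = ((srt wt S).drop ((srt wt S).length - k)).sum := by
  induction S using Finset.induction_on generalizing k with
  | empty =>
    rw [fRew_empty]
    unfold srt
    simp
  | @insert v S hv ih =>
    rcases Nat.eq_zero_or_pos k with rfl | hk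
    · rw [fRew_zero, Nat.sub_zero, List.drop_length]
      rfl
    · rw [fRew_insert k hk wt S hv, ih, ih, srt_insert wt hv]
      set l := srt wt S with hl
      have hlen : ((insert v S).card : ℕ) = S.card + 1 := Finset.card_insert_of_notMem hv
      have hlen2 : (l.orderedInsert (· ≤ ·) (wt v)).length = l.length + 1 := by
        rw [(List.perm_orderedInsert _ _ _).length_eq]; rfl
      rcases le_or_gt k l.length with hkl | hkl
      · have hj : l.length - k < l.length := by omega
        have e1 : l.length + 1 - k = (l.length - k) + 1 := by omega
        have e2 : l.length - (k - 1) = (l.length - k) + 1 := by omega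
        rw [hlen2, e1, e2, drop_orderedInsert_sum (srt_sorted wt S) (wt v) hj]
      · have hsum : (l.orderedInsert (· ≤ ·) (wt v)).sum = wt v + l.sum := by
          rw [(List.perm_orderedInsert _ _ _).sum_eq, List.sum_cons]
        have e1 : l.length + 1 - k = 0 := by omega
        have e2 : l.length - k = 0 := by omega
        have e3 : l.length - (k - 1) = 0 := by omega
        rw [hlen2, e1, e2, e3, List.drop_zero, List.drop_zero, hsum, eq_comm, max_eq_right]
        · linarith
        · linarith [hw v]

lemma sum_range_getD (l : List ℝ) (i : ℕ) :
    ∑ j ∈ Finset.range i, l.getD j 0 = (l.take i).sum := by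
  induction i with
  | zero => simp
  | succ i ih =>
    rw [Finset.sum_range_succ, ih, List.take_succ, List.sum_append]
    congr 1
    cases h : l[i]? <;> simp [List.getD_eq_getElem?_getD, h]

lemma topList_pref (c : ℕ) (wt : ℕ → ℝ) (hw : ∀ m, 0 ≤ wt m) (S : Finset ℕ) {i : ℕ}
    (hi : i ≤ c) :
    ∑ j ∈ Finset.range i, (topList c wt S).getD j 0 = fRew c wt S - fRew (c - i) wt S := by
  have htop : topList c wt S =
      List.replicate (c - (srt wt S).length) 0 ++ (srt wt S).drop ((srt wt S).length - c) := rfl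
  rw [sum_range_getD, htop, List.take_append, List.sum_append]
  set l := srt wt S with hl
  set n := l.length with hn
  have h1 : (List.take i (List.replicate (c - n) (0:ℝ))).sum = (0:ℝ) := by
    rw [List.take_replicate]; simp
  have hlenrep : (List.replicate (c - n) (0:ℝ)).length = c - n := by simp
  rw [h1, hlenrep, zero_add, fRew_eq_topSum wt hw S c, fRew_eq_topSum wt hw S (c - i)]
  have h2 : l.drop (n - (c - i)) = (l.drop (n - c)).drop (i - (c - n)) := by
    rw [List.drop_drop]
    congr 1
    omega
  rw [← hl, ← hn, h2]
  linarith [List.sum_take_add_sum_drop (l.drop (n - c)) (i - (c - n))]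

/-- The per-item hedging term. -/
noncomputable def hedge (c : ℕ) (wt : ℕ → ℝ) (S Sπ : Finset ℕ) : ℝ :=
  max (sSup ((fun i => ∑ j ∈ Finset.range i,
      ((topList c wt S).getD j 0 - (topList c wt Sπ).getD j 0)) '' Set.Icc 1 c)) 0

lemma hedge_nonneg (c : ℕ) (wt : ℕ → ℝ) (S Sπ : Finset ℕ) : 0 ≤ hedge c wt S Sπ :=
  le_max_right _ _

lemma le_hedge {c : ℕ} {wt : ℕ → ℝ} {S Sπ : Finset ℕ} {i : ℕ} (hi1 : 1 ≤ i) (hi2 : i ≤ c) :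
    ∑ j ∈ Finset.range i, ((topList c wt S).getD j 0 - (topList c wt Sπ).getD j 0) ≤
      hedge c wt S Sπ :=
  le_trans (le_csSup (((Set.finite_Icc 1 c).image _).bddAbove)
    (Set.mem_image_of_mem _ (Set.mem_Icc.mpr ⟨hi1, hi2⟩))) (le_max_left _ _)

lemma hedge_le {c : ℕ} {wt : ℕ → ℝ} {S Sπ : Finset ℕ} {X : ℝ} (hX : 0 ≤ X)
    (hbd : ∀ i, 1 ≤ i → i ≤ c → ∑ j ∈ Finset.range i,
      ((topList c wt S).getD j 0 - (topList c wt Sπ).getD j 0) ≤ X) :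
    hedge c wt S Sπ ≤ X := by
  apply max_le _ hX
  apply Real.sSup_le _ hX
  rintro x ⟨i, hi, rfl⟩
  exact hbd i hi.1 hi.2

lemma hedge_self (c : ℕ) (wt : ℕ → ℝ) (S : Finset ℕ) : hedge c wt S S = 0 := by
  apply le_antisymm (hedge_le le_rfl fun i _ _ => by simp) (hedge_nonneg _ _ _ _)

lemma fRew_insert_ge (c : ℕ) (hc : 1 ≤ c) (wt : ℕ → ℝ) {v : ℕ} {S : Finset ℕ} (hv : v ∉ S) :
    fRew c wt S ≤ fRew c wt (insert v S) := by
  rw [fRew_insert c hc wt S hv]; exact le_max_left _ _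

lemma key_ineq (c : ℕ) (hc : 1 ≤ c) (wt : ℕ → ℝ) (hw : ∀ m, 0 ≤ wt m)
    {v : ℕ} {S Sπ : Finset ℕ} (hvS : v ∉ S) (hvSπ : v ∉ Sπ) :
    fRew c wt (insert v Sπ) - fRew c wt Sπ + hedge c wt (insert v S) (insert v Sπ) ≤
    fRew c wt (insert v S) - fRew c wt S + hedge c wt S Sπ := by
  set h := hedge c wt S Sπ with hh
  set a := wt v with ha
  have ha0 : 0 ≤ a := hw v
  -- the basic prefix bound
  have F1 : ∀ i, 1 ≤ i → i ≤ c →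
      fRew c wt S - fRew (c - i) wt S - (fRew c wt Sπ - fRew (c - i) wt Sπ) ≤ h := by
    intro i hi1 hi2
    have := le_hedge (wt := wt) (S := S) (Sπ := Sπ) hi1 hi2
    rwa [Finset.sum_sub_distrib, topList_pref c wt hw S hi2, topList_pref c wt hw Sπ hi2] at this
  have hF0 : 0 ≤ h := hedge_nonneg _ _ _ _
  have ht0 : fRew (0:ℕ) wt S = 0 := fRew_zero wt S
  have hp0 : fRew (0:ℕ) wt Sπ = 0 := fRew_zero wt Sπ
  have htc : fRew c wt (insert v S) = max (fRew c wt S) (fRew (c-1) wt S + a) :=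
    fRew_insert c hc wt S hvS
  have hpc : fRew c wt (insert v Sπ) = max (fRew c wt Sπ) (fRew (c-1) wt Sπ + a) :=
    fRew_insert c hc wt Sπ hvSπ
  -- X is the bound for the new hedge
  set X : ℝ := h + (fRew c wt (insert v S) - fRew c wt S)
    - (fRew c wt (insert v Sπ) - fRew c wt Sπ) with hX
  have hX0 : 0 ≤ X := by
    have h1 := F1 1 le_rfl hc
    rw [hX, htc, hpc]
    rcases max_cases (fRew c wt S) (fRew (c-1) wt S + a) with ⟨e1, e2⟩ | ⟨e1, e2⟩ <;>
      rcases max_cases (fRew c wt Sπ) (fRew (c-1) wt Sπ + a) with ⟨f1, f2⟩ | ⟨f1, f2⟩ <;>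
      rw [e1, f1] <;> linarith
  have hbound : hedge c wt (insert v S) (insert v Sπ) ≤ X := by
    apply hedge_le hX0
    intro i hi1 hi2
    rw [Finset.sum_sub_distrib, topList_pref c wt hw (insert v S) hi2,
      topList_pref c wt hw (insert v Sπ) hi2]
    -- reduce to bounding fRew (c-i) differences
    have hk : fRew (c-i) wt (insert v Sπ) - fRew (c-i) wt (insert v S) ≤ h - fRew c wt S + fRew c wt Sπ := by
      rcases Nat.eq_zero_or_pos (c - i) with hk0 | hkpos
      · rw [hk0, fRew_zero, fRew_zero]
        have := F1 c hc le_rfl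
        have hci : c - c = 0 := by omega
        rw [hci, ht0, hp0] at this
        linarith
      · have htk : fRew (c-i) wt (insert v S) =
            max (fRew (c-i) wt S) (fRew (c-i-1) wt S + a) := fRew_insert _ hkpos wt S hvS
        have hpk : fRew (c-i) wt (insert v Sπ) =
            max (fRew (c-i) wt Sπ) (fRew (c-i-1) wt Sπ + a) := fRew_insert _ hkpos wt Sπ hvSπ
        have hFi : fRew c wt S - fRew (c-i) wt S - (fRew c wt Sπ - fRew (c-i) wt Sπ) ≤ h :=
          F1 i hi1 hi2
        have hFi' : fRew c wt S - fRew (c-(i+1)) wt S - (fRew c wt Sπ - fRew (c-(i+1)) wt Sπ) ≤ h := by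
          apply F1 (i+1) (by omega) (by omega)
        have hidx : c - (i+1) = c - i - 1 := by omega
        rw [hidx] at hFi'
        rw [htk, hpk]
        rcases max_cases (fRew (c-i) wt Sπ) (fRew (c-i-1) wt Sπ + a) with ⟨f1, f2⟩ | ⟨f1, f2⟩ <;>
          rcases max_cases (fRew (c-i) wt S) (fRew (c-i-1) wt S + a) with ⟨e1, e2⟩ | ⟨e1, e2⟩ <;>
          rw [e1, f1] <;> linarith
    rw [hX]
    linarith
  linarith

lemma Vset_zero {U : Type*} [DecidableEq U] (x : ℕ → Option U) (u : U) :
    Vset x u 0 = ∅ := by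
  unfold Vset
  rw [Finset.Icc_eq_empty (by omega), Finset.filter_empty]

lemma Vset_succ {U : Type*} [DecidableEq U] (x : ℕ → Option U) (u : U) {v : ℕ} (hv : 1 ≤ v) :
    Vset x u v = if x v = some u then insert v (Vset x u (v-1)) else Vset x u (v-1) := by
  unfold Vset
  have hIcc : Finset.Icc 1 v = insert v (Finset.Icc 1 (v-1)) := by
    ext m; simp only [Finset.mem_Icc, Finset.mem_insert]; omega
  rw [hIcc, Finset.filter_insert]

lemma not_mem_Vset {U : Type*} [DecidableEq U] (x : ℕ → Option U) (u : U) {v : ℕ} (hv : 1 ≤ v) :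
    v ∉ Vset x u (v-1) := by
  unfold Vset
  simp only [Finset.mem_filter, Finset.mem_Icc, not_and]
  intro h1 h2
  omega

lemma totalRew_succ {U : Type*} [Fintype U] [DecidableEq U] (c : U → ℕ) (w : U → ℕ → ℝ)
    (x : ℕ → Option U) {v : ℕ} (hv : 1 ≤ v) :
    totalRew c w x v = totalRew c w x (v-1) +
      ((x v).elim (0:ℝ) fun u =>
        fRew (c u) (w u) (insert v (Vset x u (v-1))) - fRew (c u) (w u) (Vset x u (v-1))) := by
  unfold totalRew
  cases hxv : x v with
  | none =>
    simp only [Option.elim, add_zero]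
    apply Finset.sum_congr rfl
    intro u _
    rw [Vset_succ x u hv, hxv, if_neg (by simp)]
  | some u₀ =>
    have hstep : ∀ u : U, fRew (c u) (w u) (Vset x u v) = fRew (c u) (w u) (Vset x u (v-1)) +
        (if u = u₀ then (fRew (c u) (w u) (insert v (Vset x u (v-1))) -
          fRew (c u) (w u) (Vset x u (v-1))) else 0) := by
      intro u
      rw [Vset_succ x u hv, hxv]
      by_cases h : u = u₀
      · subst h; rw [if_pos rfl, if_pos rfl]; ring
      · rw [if_neg (by simpa using fun he => h he.symm), if_neg h, add_zero]
    rw [Finset.sum_congr rfl (fun u _ => hstep u), Finset.sum_add_distrib,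
      Finset.sum_ite_eq' Finset.univ u₀ _, if_pos (Finset.mem_univ u₀)]
    simp

lemma hedgeSum_eq_sum {U : Type*} [Fintype U] (c : U → ℕ) (w : U → ℕ → ℝ)
    (V Vπ : U → Finset ℕ) :
    hedgeSum c w V Vπ = ∑ u : U, hedge (c u) (w u) (V u) (Vπ u) := rfl

theorem lomar_free_disposal_robustness'
    {U : Type*} [Fintype U] [DecidableEq U]
    (c : U → ℕ) (hc : ∀ u, 1 ≤ c u) (T : ℕ) (w : U → ℕ → ℝ)
    (hw : ∀ u v, 0 ≤ w u v)
    (ρ B : ℝ) (hρ₀ : 0 ≤ ρ) (hρ₁ : ρ ≤ 1) (hB : 0 ≤ B)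
    (xπ : ℕ → U) (xt x : ℕ → Option U)
    (hfollow : ∀ v, 1 ≤ v → v ≤ T → fdCond c w ρ B xπ x xt v → x v = xt v)
    (hexpert : ∀ v, 1 ≤ v → v ≤ T → ¬ fdCond c w ρ B xπ x xt v → x v = some (xπ v)) :
    totalRew c w x T ≥ ρ * totalRew c w (fun v' => some (xπ v')) T - B := by
  set π : ℕ → Option U := fun v' => some (xπ v') with hπ
  have main : ∀ v, v ≤ T → totalRew c w x v ≥
      ρ * (totalRew c w π v +
        hedgeSum c w (fun u => Vset x u v) (fun u => Vset π u v)) - B := by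
    intro v
    induction v with
    | zero =>
      intro _
      have h1 : totalRew c w x 0 = 0 := by
        unfold totalRew
        apply Finset.sum_eq_zero
        intro u _
        rw [Vset_zero, fRew_empty]
      have h2 : totalRew c w π 0 = 0 := by
        unfold totalRew
        apply Finset.sum_eq_zero
        intro u _
        rw [Vset_zero, fRew_empty]
      have h3 : hedgeSum c w (fun u => Vset x u 0) (fun u => Vset π u 0) = 0 := by
        rw [hedgeSum_eq_sum]
        apply Finset.sum_eq_zero
        intro u _
        rw [Vset_zero, Vset_zero, hedge_self]
      rw [h1, h2, h3]
      simp only [add_zero, mul_zero]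
      linarith
    | succ v ih =>
      intro hvT
      have ihv := ih (by omega)
      have hv1 : 1 ≤ v + 1 := by omega
      have hsub : v + 1 - 1 = v := rfl
      by_cases hcond : fdCond c w ρ B xπ x xt (v+1)
      · -- follow the RL advice
        have hx : x (v+1) = xt (v+1) := hfollow (v+1) hv1 hvT hcond
        unfold fdCond at hcond
        rw [hsub] at hcond
        have hR : totalRew c w x (v+1) = totalRew c w x v +
            ((xt (v+1)).elim (0:ℝ) fun u =>
              fRew (c u) (w u) (insert (v+1) (Vset x u v)) - fRew (c u) (w u) (Vset x u v)) := by
          have := totalRew_succ c w x hv1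
          rw [hsub] at this
          rw [this, hx]
        have hsets : (fun u => if xt (v+1) = some u then insert (v+1) (Vset x u v)
            else Vset x u v) = fun u => Vset x u (v+1) := by
          funext u
          rw [Vset_succ x u hv1, hsub, hx]
        rw [hR]
        rw [hsets] at hcond
        exact hcond
      · -- follow the expert
        have hx : x (v+1) = some (xπ (v+1)) := hexpert (v+1) hv1 hvT hcond
        set u₀ := xπ (v+1) with hu₀
        set S := Vset x u₀ v with hS
        set Sπ := Vset π u₀ v with hSπ
        have hvS : (v+1) ∉ S := by rw [hS, ← hsub]; exact not_mem_Vset x u₀ hv1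
        have hvSπ : (v+1) ∉ Sπ := by rw [hSπ, ← hsub]; exact not_mem_Vset π u₀ hv1
        -- reward recursions
        have hR : totalRew c w x (v+1) = totalRew c w x v +
            (fRew (c u₀) (w u₀) (insert (v+1) S) - fRew (c u₀) (w u₀) S) := by
          have := totalRew_succ c w x hv1
          rw [hsub] at this
          rw [this, hx]
          rfl
        have hRπ : totalRew c w π (v+1) = totalRew c w π v +
            (fRew (c u₀) (w u₀) (insert (v+1) Sπ) - fRew (c u₀) (w u₀) Sπ) := by
          have := totalRew_succ c w π hv1
          rw [hsub] at this
          rw [this]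
          rfl
        -- hedge sum recursion
        have hG : hedgeSum c w (fun u => Vset x u (v+1)) (fun u => Vset π u (v+1)) =
            hedgeSum c w (fun u => Vset x u v) (fun u => Vset π u v) +
            (hedge (c u₀) (w u₀) (insert (v+1) S) (insert (v+1) Sπ) -
              hedge (c u₀) (w u₀) S Sπ) := by
          rw [hedgeSum_eq_sum, hedgeSum_eq_sum]
          have hstep : ∀ u : U, hedge (c u) (w u) (Vset x u (v+1)) (Vset π u (v+1)) =
              hedge (c u) (w u) (Vset x u v) (Vset π u v) +
              (if u = u₀ then (hedge (c u₀) (w u₀) (insert (v+1) S) (insert (v+1) Sπ) -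
                hedge (c u₀) (w u₀) S Sπ) else 0) := by
            intro u
            rw [Vset_succ x u hv1, Vset_succ π u hv1, hsub, hx]
            by_cases h : u = u₀
            · subst h
              rw [if_pos rfl, if_pos rfl, if_pos rfl]
              ring
            · have hne : ¬ (π (v+1) = some u) := by
                rw [hπ]
                simp only [Option.some.injEq]
                intro he
                exact h (by rw [hu₀]; exact he.symm)
              rw [if_neg (by simpa using fun he => h he.symm), if_neg hne, if_neg h, add_zero]
          rw [Finset.sum_congr rfl (fun u _ => hstep u), Finset.sum_add_distrib,
            Finset.sum_ite_eq' Finset.univ u₀ _, if_pos (Finset.mem_univ u₀)]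
        -- the key inequality
        have hkey := key_ineq (c u₀) (hc u₀) (w u₀) (hw u₀) hvS hvSπ
        have hΔR : fRew (c u₀) (w u₀) S ≤ fRew (c u₀) (w u₀) (insert (v+1) S) :=
          fRew_insert_ge (c u₀) (hc u₀) (w u₀) hvS
        -- arithmetic
        set ΔR := fRew (c u₀) (w u₀) (insert (v+1) S) - fRew (c u₀) (w u₀) S with hΔR'
        set D := (fRew (c u₀) (w u₀) (insert (v+1) Sπ) - fRew (c u₀) (w u₀) Sπ) +
            (hedge (c u₀) (w u₀) (insert (v+1) S) (insert (v+1) Sπ) -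
              hedge (c u₀) (w u₀) S Sπ) with hD
        have hDle : D ≤ ΔR := by rw [hD, hΔR']; linarith
        have hρD : ρ * D ≤ ΔR := by
          rcases le_or_gt 0 D with h0 | h0
          · calc ρ * D ≤ 1 * D := mul_le_mul_of_nonneg_right hρ₁ h0
              _ = D := one_mul D
              _ ≤ ΔR := hDle
          · have : ρ * D ≤ 0 := mul_nonpos_of_nonneg_of_nonpos hρ₀ h0.le
            have : (0:ℝ) ≤ ΔR := by rw [hΔR']; linarith
            linarith [mul_nonpos_of_nonneg_of_nonpos hρ₀ h0.le]
        rw [hR, hRπ, hG]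
        have hring : ρ * ((totalRew c w π v +
            (fRew (c u₀) (w u₀) (insert (v+1) Sπ) - fRew (c u₀) (w u₀) Sπ)) +
            (hedgeSum c w (fun u => Vset x u v) (fun u => Vset π u v) +
              (hedge (c u₀) (w u₀) (insert (v+1) S) (insert (v+1) Sπ) -
                hedge (c u₀) (w u₀) S Sπ))) =
            ρ * (totalRew c w π v +
              hedgeSum c w (fun u => Vset x u v) (fun u => Vset π u v)) + ρ * D := by
          rw [hD]; ring
        rw [ge_iff_le, hring]
        linarith
  have hfin := main T le_rfl
  have hGnn : 0 ≤ hedgeSum c w (fun u => Vset x u T) (fun u => Vset π u T) := by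
    rw [hedgeSum_eq_sum]
    exact Finset.sum_nonneg fun u _ => hedge_nonneg _ _ _ _
  have hρG : 0 ≤ ρ * hedgeSum c w (fun u => Vset x u T) (fun u => Vset π u T) :=
    mul_nonneg hρ₀ hGnn
  have hexp : ρ * (totalRew c w π T +
      hedgeSum c w (fun u => Vset x u T) (fun u => Vset π u T)) =
      ρ * totalRew c w π T +
      ρ * hedgeSum c w (fun u => Vset x u T) (fun u => Vset π u T) := by ring
  rw [hexp] at hfin
  rw [hπ] at hfin
  linarith

/-- **LOMAR robustness in the free-disposal setting.**
For every `ρ ∈ [0,1]`, `B ≥ 0`, every expert strategy `x^π` (with `x^π_v ∈ U` for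
each `v`), and every sequence of RL suggestions `x̃_v ∈ U ∪ {skip}`, the strategy `x`
produced by LOMAR's free-disposal switching rule has total reward satisfying
`R_T ≥ ρ·R^π_T − B`. -/
theorem lomar_free_disposal_robustness
    {U : Type*} [Fintype U] [DecidableEq U]
    (c : U → ℕ) (hc : ∀ u, 1 ≤ c u) (T : ℕ) (w : U → ℕ → ℝ)
    (hw : ∀ u v, 0 ≤ w u v)
    (ρ B : ℝ) (hρ₀ : 0 ≤ ρ) (hρ₁ : ρ ≤ 1) (hB : 0 ≤ B)
    (xπ : ℕ → U) (xt x : ℕ → Option U)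
    (hfollow : ∀ v, 1 ≤ v → v ≤ T → fdCond c w ρ B xπ x xt v → x v = xt v)
    (hexpert : ∀ v, 1 ≤ v → v ≤ T → ¬ fdCond c w ρ B xπ x xt v → x v = some (xπ v)) :
    totalRew c w x T ≥ ρ * totalRew c w (fun v' => some (xπ v')) T - B := by
  exact lomar_free_disposal_robustness' c hc T w hw ρ B hρ₀ hρ₁ hB xπ xt x hfollow hexpert
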